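/- Let (S_i, X_i), i = 1,…,n be i.i.d. pairs with common joint distribution p_{S,X} over finite sets. Define δ(p) as the minimum of ‖E[f(X)|S]‖₂² over zero-mean unit-variance functions f of X (with δ = 0 if |𝒳| > |𝒮|). Then δ(p_{Sⁿ,Xⁿ}) = δ(p_{S,X})ⁿ. -/

import Mathlib

open Finset Real

/-- `δ(p_{S,X})`: the infimum of `‖E[f(X)|S]‖₂²` over zero-mean,
unit-variance functions `f` of `X`. -/
noncomputable def deltaPIC {σ α : Type*} [Fintype σ] [Fintype α]
    (p : σ → α → ℝ) : ℝ :=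
  sInf { t : ℝ | ∃ f : α → ℝ,
    (∑ x, (∑ s, p s x) * f x) = 0 ∧ (∑ x, (∑ s, p s x) * (f x) ^ 2) = 1 ∧
    t = ∑ s, (∑ x, p s x) * ((∑ x, p s x * f x) / (∑ x, p s x)) ^ 2 }

namespace DeltaPICAux

variable {σ α : Type*} [Fintype σ] [Fintype α]

noncomputable def pS (p : σ → α → ℝ) (s : σ) : ℝ := ∑ x, p s x
noncomputable def pX (p : σ → α → ℝ) (x : α) : ℝ := ∑ s, p s x
noncomputable def mE (p : σ → α → ℝ) (f : α → ℝ) : ℝ := ∑ x, pX p x * f x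
noncomputable def nE (p : σ → α → ℝ) (f : α → ℝ) : ℝ := ∑ x, pX p x * f x ^ 2
noncomputable def Phi (p : σ → α → ℝ) (f : α → ℝ) : ℝ :=
  ∑ s, pS p s * ((∑ x, p s x * f x) / pS p s) ^ 2

noncomputable def CSet (p : σ → α → ℝ) : Set (α → ℝ) := {f | mE p f = 0 ∧ nE p f = 1}

lemma deltaPIC_eq (p : σ → α → ℝ) :
    deltaPIC p = sInf (Phi p '' CSet p) := by
  unfold deltaPIC
  congr 1
  ext t
  constructor
  · rintro ⟨f, h1, h2, h3⟩
    exact ⟨f, ⟨h1, h2⟩, h3.symm⟩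
  · rintro ⟨f, ⟨h1, h2⟩, h3⟩
    exact ⟨f, h1, h2, h3.symm⟩

section Basic
variable (p : σ → α → ℝ)

lemma mass_comm : ∑ s, pS p s = ∑ x, pX p x := by
  unfold pS pX; exact Finset.sum_comm

lemma var_eq (hpX1 : ∑ x, pX p x = 1) (f : α → ℝ) :
    nE p f - (mE p f) ^ 2 = ∑ x, pX p x * (f x - mE p f) ^ 2 := by
  set m := mE p f with hm
  have step : ∀ x : α, pX p x * (f x - m) ^ 2
      = pX p x * f x ^ 2 - 2 * m * (pX p x * f x) + m ^ 2 * pX p x := by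
    intro x; ring
  rw [Finset.sum_congr rfl (fun x _ => step x), Finset.sum_add_distrib,
    Finset.sum_sub_distrib, ← Finset.mul_sum, ← Finset.mul_sum, hpX1]
  have : (∑ x, pX p x * f x) = m := rfl
  unfold nE
  rw [this]; ring

lemma var_nonneg (hp0 : ∀ s x, 0 ≤ p s x) (hpX1 : ∑ x, pX p x = 1) (f : α → ℝ) :
    (mE p f) ^ 2 ≤ nE p f := by
  have h := var_eq p hpX1 f
  have h2 : 0 ≤ ∑ x, pX p x * (f x - mE p f) ^ 2 := by
    apply Finset.sum_nonneg
    intro x _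
    have : 0 ≤ pX p x := Finset.sum_nonneg fun s _ => hp0 s x
    positivity
  linarith

lemma phi_nonneg (hS : ∀ s, 0 < pS p s) (f : α → ℝ) : 0 ≤ Phi p f := by
  apply Finset.sum_nonneg
  intro s _
  have := (hS s).le
  positivity

lemma delta_nonneg (hS : ∀ s, 0 < ∑ x, p s x) : 0 ≤ deltaPIC p := by
  rw [deltaPIC_eq]
  apply Real.sInf_nonneg
  rintro t ⟨f, _, rfl⟩
  exact phi_nonneg p hS f

lemma bddBelow_phi_image (hS : ∀ s, 0 < ∑ x, p s x) : BddBelow (Phi p '' CSet p) := by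
  refine ⟨0, ?_⟩
  rintro t ⟨f, _, rfl⟩
  exact phi_nonneg p hS f

lemma phi_le_nE (hp0 : ∀ s x, 0 ≤ p s x) (hS : ∀ s, 0 < pS p s) (f : α → ℝ) :
    Phi p f ≤ nE p f := by
  unfold Phi nE
  rw [show (∑ x, pX p x * f x ^ 2) = ∑ s, ∑ x, p s x * f x ^ 2 by
    rw [Finset.sum_comm]; unfold pX; apply Finset.sum_congr rfl; intro x _;
    rw [Finset.sum_mul]]
  apply Finset.sum_le_sum
  intro s _
  have hps := hS s
  have key : (∑ x, p s x * f x) ^ 2 ≤ pS p s * ∑ x, p s x * f x ^ 2 := by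
    have := Finset.sum_mul_sq_le_sq_mul_sq Finset.univ
      (fun x => Real.sqrt (p s x)) (fun x => Real.sqrt (p s x) * f x)
    have e1 : ∑ x, Real.sqrt (p s x) * (Real.sqrt (p s x) * f x) = ∑ x, p s x * f x := by
      apply Finset.sum_congr rfl; intro x _
      rw [← mul_assoc, Real.mul_self_sqrt (hp0 s x)]
    have e2 : ∑ x, (Real.sqrt (p s x)) ^ 2 = pS p s := by
      apply Finset.sum_congr rfl; intro x _
      rw [Real.sq_sqrt (hp0 s x)]
    have e3 : ∑ x, (Real.sqrt (p s x) * f x) ^ 2 = ∑ x, p s x * f x ^ 2 := by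
      apply Finset.sum_congr rfl; intro x _
      rw [mul_pow, Real.sq_sqrt (hp0 s x)]
    rw [e1, e2, e3] at this
    exact this
  have heq : pS p s * ((∑ x, p s x * f x) / pS p s) ^ 2
      = (∑ x, p s x * f x) ^ 2 / pS p s := by
    field_simp
  rw [heq, div_le_iff₀ hps]
  calc (∑ x, p s x * f x) ^ 2 ≤ pS p s * ∑ x, p s x * f x ^ 2 := key
    _ = (∑ x, p s x * f x ^ 2) * pS p s := by ring

end Basic


section OneStep
variable (p : σ → α → ℝ)

lemma K_mean (hS : ∀ s, 0 < pS p s) (f : α → ℝ) :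
    ∑ s, pS p s * ((∑ x, p s x * f x) / pS p s) = mE p f := by
  have : ∀ s : σ, pS p s * ((∑ x, p s x * f x) / pS p s) = ∑ x, p s x * f x := by
    intro s
    rw [mul_comm, div_mul_cancel₀ _ (hS s).ne']
  rw [Finset.sum_congr rfl (fun s _ => this s)]
  unfold mE pX
  rw [Finset.sum_comm]
  apply Finset.sum_congr rfl
  intro x _
  rw [Finset.sum_mul]

lemma phi_ge_sq_mean (hp0 : ∀ s x, 0 ≤ p s x) (hS : ∀ s, 0 < pS p s)
    (hS1 : ∑ s, pS p s = 1) (f : α → ℝ) :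
    (mE p f) ^ 2 ≤ Phi p f := by
  -- Jensen on the σ side
  have key : (∑ s, pS p s * ((∑ x, p s x * f x) / pS p s)) ^ 2
      ≤ (∑ s, pS p s) * ∑ s, pS p s * ((∑ x, p s x * f x) / pS p s) ^ 2 := by
    have := Finset.sum_mul_sq_le_sq_mul_sq Finset.univ
      (fun s => Real.sqrt (pS p s)) (fun s => Real.sqrt (pS p s) * ((∑ x, p s x * f x) / pS p s))
    have hnn : ∀ s : σ, (0:ℝ) ≤ pS p s := fun s => (hS s).le
    have e1 : ∑ s, Real.sqrt (pS p s) * (Real.sqrt (pS p s) * ((∑ x, p s x * f x) / pS p s))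
        = ∑ s, pS p s * ((∑ x, p s x * f x) / pS p s) := by
      apply Finset.sum_congr rfl; intro s _
      rw [← mul_assoc, Real.mul_self_sqrt (hnn s)]
    have e2 : ∑ s, (Real.sqrt (pS p s)) ^ 2 = ∑ s, pS p s := by
      apply Finset.sum_congr rfl; intro s _; rw [Real.sq_sqrt (hnn s)]
    have e3 : ∑ s, (Real.sqrt (pS p s) * ((∑ x, p s x * f x) / pS p s)) ^ 2
        = ∑ s, pS p s * ((∑ x, p s x * f x) / pS p s) ^ 2 := by
      apply Finset.sum_congr rfl; intro s _; rw [mul_pow, Real.sq_sqrt (hnn s)]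
    rw [e1, e2, e3] at this
    exact this
  rw [K_mean p hS f, hS1, one_mul] at key
  exact key

lemma one_step (hp0 : ∀ s x, 0 ≤ p s x) (hS : ∀ s, 0 < pS p s)
    (hX : ∀ x, 0 < pX p x) (hpX1 : ∑ x, pX p x = 1) (hS1 : ∑ s, pS p s = 1)
    (f : α → ℝ) :
    (mE p f) ^ 2 + deltaPIC p * (nE p f - (mE p f) ^ 2) ≤ Phi p f := by
  set m := mE p f with hm
  set v := nE p f - m ^ 2 with hv
  have hv0 : 0 ≤ v := by
    have := var_nonneg p hp0 hpX1 f; linarith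
  rcases eq_or_lt_of_le hv0 with hveq | hvpos
  · -- v = 0
    rw [← hveq, mul_zero, add_zero]
    exact phi_ge_sq_mean p hp0 hS hS1 f
  · -- v > 0
    set g : α → ℝ := fun x => (f x - m) / Real.sqrt v with hg
    have hsv : Real.sqrt v > 0 := Real.sqrt_pos.mpr hvpos
    have hsv2 : Real.sqrt v ^ 2 = v := Real.sq_sqrt hv0
    have hmg : mE p g = 0 := by
      unfold mE
      have : ∀ x : α, pX p x * g x = (pX p x * f x - m * pX p x) / Real.sqrt v := by
        intro x; rw [hg]; field_simp
      rw [Finset.sum_congr rfl (fun x _ => this x), ← Finset.sum_div,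
        Finset.sum_sub_distrib, ← Finset.mul_sum, hpX1]
      have : (∑ x, pX p x * f x) = m := rfl
      rw [this]
      simp
    have hng : nE p g = 1 := by
      unfold nE
      have : ∀ x : α, pX p x * g x ^ 2 = (pX p x * (f x - m)^2) / v := by
        intro x; rw [hg, div_pow, hsv2]; ring
      rw [Finset.sum_congr rfl (fun x _ => this x), ← Finset.sum_div]
      rw [← var_eq p hpX1 f]
      rw [← hm, ← hv]
      field_simp
    have hdg : deltaPIC p ≤ Phi p g := by
      rw [deltaPIC_eq]
      apply csInf_le (bddBelow_phi_image p hS)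
      exact ⟨g, ⟨hmg, hng⟩, rfl⟩
    clear_value g v m
    have hPhif : Phi p f = m ^ 2 + v * Phi p g := by
      unfold Phi
      have hfx : ∀ x : α, f x = m + Real.sqrt v * g x := by
        intro x; rw [hg]; field_simp; ring
      have hterm : ∀ s : σ, pS p s * ((∑ x, p s x * f x) / pS p s) ^ 2
          = pS p s * m^2 + 2 * m * Real.sqrt v * (pS p s * ((∑ x, p s x * g x) / pS p s))
            + v * (pS p s * ((∑ x, p s x * g x) / pS p s) ^ 2) := by
        intro s
        have hps := (hS s).ne'
        have hsum : (∑ x, p s x * f x) = m * pS p s + Real.sqrt v * ∑ x, p s x * g x := by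
          rw [Finset.sum_congr rfl (fun x _ => by rw [hfx x] : ∀ x ∈ univ, p s x * f x = p s x * (m + Real.sqrt v * g x))]
          unfold pS
          rw [Finset.mul_sum, Finset.mul_sum, ← Finset.sum_add_distrib]
          apply Finset.sum_congr rfl; intro x _; ring
        set B := ∑ x, p s x * g x with hB
        have e : (m * pS p s + Real.sqrt v * B) / pS p s
            = m + Real.sqrt v * (B / pS p s) := by
          field_simp
        calc pS p s * ((∑ x, p s x * f x) / pS p s) ^ 2
            = pS p s * (m + Real.sqrt v * (B / pS p s)) ^ 2 := by rw [hsum, e]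
          _ = pS p s * m ^ 2 + 2 * m * Real.sqrt v * (pS p s * (B / pS p s))
              + Real.sqrt v ^ 2 * (pS p s * (B / pS p s) ^ 2) := by ring
          _ = pS p s * m^2 + 2 * m * Real.sqrt v * (pS p s * ((∑ x, p s x * g x) / pS p s))
              + v * (pS p s * ((∑ x, p s x * g x) / pS p s) ^ 2) := by rw [hsv2, ← hB]
      rw [Finset.sum_congr rfl (fun s _ => hterm s), Finset.sum_add_distrib,
        Finset.sum_add_distrib, ← Finset.mul_sum, ← Finset.mul_sum, ← Finset.sum_mul]
      rw [K_mean p hS g, hmg, hS1]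
      ring
    rw [hPhif]
    have := mul_le_mul_of_nonneg_left hdg hv0
    linarith

end OneStep

section Tensor
variable {τ β : Type*} [Fintype τ] [Fintype β]

lemma pS_prod (p : σ → α → ℝ) (q : τ → β → ℝ) (z : σ × τ) :
    pS (fun (z : σ × τ) (w : α × β) => p z.1 w.1 * q z.2 w.2) z = pS p z.1 * pS q z.2 := by
  unfold pS
  rw [Fintype.sum_prod_type]
  rw [Finset.sum_mul]
  apply Finset.sum_congr rfl
  intro x _
  rw [Finset.mul_sum]

lemma pX_prod (p : σ → α → ℝ) (q : τ → β → ℝ) (w : α × β) :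
    pX (fun (z : σ × τ) (w : α × β) => p z.1 w.1 * q z.2 w.2) w = pX p w.1 * pX q w.2 := by
  unfold pX
  rw [Fintype.sum_prod_type]
  rw [Finset.sum_mul]
  apply Finset.sum_congr rfl
  intro s _
  rw [Finset.mul_sum]

lemma tensor_step (p : σ → α → ℝ) (q : τ → β → ℝ)
    (hp0 : ∀ s x, 0 ≤ p s x) (hq0 : ∀ t y, 0 ≤ q t y)
    (hpS : ∀ s, 0 < pS p s) (hqS : ∀ t, 0 < pS q t)
    (hpX1 : ∑ x, pX p x = 1) (hqX1 : ∑ y, pX q y = 1)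
    (c d : ℝ) (hc0 : 0 ≤ c) (hc1 : c ≤ 1) (hd0 : 0 ≤ d) (hd1 : d ≤ 1)
    (Hp : ∀ f : α → ℝ, (mE p f)^2 + c * (nE p f - (mE p f)^2) ≤ Phi p f)
    (Hq : ∀ g : β → ℝ, (mE q g)^2 + d * (nE q g - (mE q g)^2) ≤ Phi q g)
    (F : α × β → ℝ) :
    (mE (fun (z : σ × τ) (w : α × β) => p z.1 w.1 * q z.2 w.2) F) ^ 2
      + c * d * (nE (fun (z : σ × τ) (w : α × β) => p z.1 w.1 * q z.2 w.2) F
          - (mE (fun (z : σ × τ) (w : α × β) => p z.1 w.1 * q z.2 w.2) F) ^ 2)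
      ≤ Phi (fun (z : σ × τ) (w : α × β) => p z.1 w.1 * q z.2 w.2) F := by
  set r := fun (z : σ × τ) (w : α × β) => p z.1 w.1 * q z.2 w.2 with hr
  set g : τ → α → ℝ := fun t x => (∑ y, q t y * F (x, y)) / pS q t with hg
  set h : β → ℝ := fun y => ∑ x, pX p x * F (x, y) with hh
  set m2 : α → ℝ := fun x => mE q (fun y => F (x, y)) with hm2
  set M := mE r F with hM
  -- E1 : Phi r F = ∑ t, pS q t * Phi p (g t)
  have E1 : Phi r F = ∑ t, pS q t * Phi p (g t) := by
    unfold Phi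
    rw [Fintype.sum_prod_type, Finset.sum_comm]
    apply Finset.sum_congr rfl
    intro t _
    rw [Finset.mul_sum]
    apply Finset.sum_congr rfl
    intro s _
    have hps := (hpS s).ne'
    have hqt := (hqS t).ne'
    have hinner : (∑ w : α × β, r (s, t) w * F w) = pS q t * ∑ x, p s x * g t x := by
      rw [Fintype.sum_prod_type]
      rw [Finset.mul_sum]
      apply Finset.sum_congr rfl
      intro x _
      have e0 : pS q t * (p s x * g t x) = p s x * ∑ y, q t y * F (x, y) := by
        rw [hg]; simp only []; field_simp
      rw [e0, Finset.mul_sum]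
      apply Finset.sum_congr rfl
      intro y _
      simp only [hr]
      ring
    rw [hinner, pS_prod]
    simp only []
    have e : pS q t * (∑ x, p s x * g t x) / (pS p s * pS q t)
        = (∑ x, p s x * g t x) / pS p s := by
      field_simp
    rw [e]
    ring
  -- E3 : ∑ t, pS q t * (mE p (g t))^2 = Phi q h
  have hmg : ∀ t, mE p (g t) = (∑ y, q t y * h y) / pS q t := by
    intro t
    unfold mE
    have l1 : ∀ x : α, pX p x * g t x = ∑ y, pX p x * q t y * F (x, y) / pS q t := by
      intro x
      rw [hg]; simp only []
      rw [mul_div_assoc', Finset.mul_sum, Finset.sum_div]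
      apply Finset.sum_congr rfl
      intro y _
      ring
    rw [Finset.sum_congr rfl (fun x _ => l1 x), Finset.sum_comm]
    rw [hh]; simp only []
    rw [Finset.sum_div]
    apply Finset.sum_congr rfl
    intro y _
    rw [Finset.mul_sum, Finset.sum_div]
    apply Finset.sum_congr rfl
    intro x _
    ring
  have E3 : ∑ t, pS q t * (mE p (g t)) ^ 2 = Phi q h := by
    unfold Phi
    apply Finset.sum_congr rfl
    intro t _
    rw [hmg t]
  have E6 : ∑ t, pS q t * nE p (g t) = ∑ x, pX p x * Phi q (fun y => F (x, y)) := by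
    unfold nE Phi
    calc ∑ t, pS q t * ∑ x, pX p x * g t x ^ 2
        = ∑ t, ∑ x, pX p x * (pS q t * g t x ^ 2) := by
          apply Finset.sum_congr rfl; intro t _
          rw [Finset.mul_sum]; apply Finset.sum_congr rfl; intro x _; ring
      _ = ∑ x, ∑ t, pX p x * (pS q t * g t x ^ 2) := Finset.sum_comm
      _ = ∑ x, pX p x * ∑ t, pS q t * ((∑ y, q t y * F (x, y)) / pS q t) ^ 2 := by
          apply Finset.sum_congr rfl; intro x _
          rw [Finset.mul_sum]
  have E8 : ∑ x, pX p x * nE q (fun y => F (x, y)) = nE r F := by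
    unfold nE
    rw [Fintype.sum_prod_type]
    apply Finset.sum_congr rfl
    intro x _
    rw [Finset.mul_sum]
    apply Finset.sum_congr rfl
    intro y _
    rw [pX_prod p q (x, y)]
    ring
  have E9 : ∑ x, pX p x * (m2 x) ^ 2 = nE p m2 := rfl
  have hMexp : M = ∑ x, ∑ y, pX p x * (pX q y * F (x, y)) := by
    rw [hM]; unfold mE
    rw [Fintype.sum_prod_type]
    apply Finset.sum_congr rfl
    intro x _
    apply Finset.sum_congr rfl
    intro y _
    rw [pX_prod p q (x, y)]
    ring
  have E5 : mE q h = M := by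
    unfold mE
    rw [hh]; simp only []
    rw [hMexp, Finset.sum_comm]
    apply Finset.sum_congr rfl
    intro y _
    rw [Finset.mul_sum]
    apply Finset.sum_congr rfl
    intro x _
    ring
  have E5' : mE p m2 = M := by
    unfold mE
    rw [hm2]; simp only []
    rw [hMexp]
    apply Finset.sum_congr rfl
    intro x _
    unfold mE
    rw [Finset.mul_sum]
  have I3' : M ^ 2 ≤ nE q h := by rw [← E5]; exact var_nonneg q hq0 hqX1 h
  have I4' : M ^ 2 ≤ nE p m2 := by rw [← E5']; exact var_nonneg p hp0 hpX1 m2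
  have S1 : (1 - c) * (∑ t, pS q t * (mE p (g t)) ^ 2) + c * (∑ t, pS q t * nE p (g t))
      ≤ ∑ t, pS q t * Phi p (g t) := by
    rw [Finset.mul_sum, Finset.mul_sum, ← Finset.sum_add_distrib]
    apply Finset.sum_le_sum
    intro t _
    have key := mul_le_mul_of_nonneg_left (Hp (g t)) (hqS t).le
    nlinarith [key]
  have S2 : (1 - d) * nE p m2 + d * nE r F ≤ ∑ x, pX p x * Phi q (fun y => F (x, y)) := by
    rw [← E8, ← E9, Finset.mul_sum, Finset.mul_sum, ← Finset.sum_add_distrib]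
    apply Finset.sum_le_sum
    intro x _
    have h0 : (0:ℝ) ≤ pX p x := Finset.sum_nonneg fun s _ => hp0 s x
    have key := mul_le_mul_of_nonneg_left (Hq (fun y => F (x, y))) h0
    have hm2x : m2 x = mE q (fun y => F (x, y)) := rfl
    rw [hm2x]
    nlinarith [key]
  have I_q : (1 - d) * M ^ 2 + d * nE q h ≤ Phi q h := by
    have := Hq h
    rw [E5] at this
    nlinarith [this]
  have G1 : (1 - c) * Phi q h + c * (∑ x, pX p x * Phi q (fun y => F (x, y))) ≤ Phi r F := by
    rw [E1, ← E3, ← E6]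
    exact S1
  have G2 : (1 - c) * ((1 - d) * M ^ 2 + d * nE q h) ≤ (1 - c) * Phi q h :=
    mul_le_mul_of_nonneg_left I_q (by linarith)
  have G3 : c * ((1 - d) * nE p m2 + d * nE r F)
      ≤ c * (∑ x, pX p x * Phi q (fun y => F (x, y))) :=
    mul_le_mul_of_nonneg_left S2 hc0
  have P1 : 0 ≤ (1 - c) * d * (nE q h - M ^ 2) :=
    mul_nonneg (mul_nonneg (by linarith) hd0) (by linarith)
  have P2 : 0 ≤ c * (1 - d) * (nE p m2 - M ^ 2) :=
    mul_nonneg (mul_nonneg hc0 (by linarith)) (by linarith)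
  nlinarith [G1, G2, G3, P1, P2]

end Tensor


section Transfer
variable {σ' α' : Type*} [Fintype σ'] [Fintype α']
variable (p : σ → α → ℝ) (p' : σ' → α' → ℝ) (eσ : σ' ≃ σ) (eα : α' ≃ α)

lemma pX_transfer (hk : ∀ s x, p' s x = p (eσ s) (eα x)) (x' : α') :
    pX p' x' = pX p (eα x') := by
  unfold pX
  exact Fintype.sum_equiv eσ _ _ (fun s' => hk s' x')

lemma pS_transfer (hk : ∀ s x, p' s x = p (eσ s) (eα x)) (s' : σ') :
    pS p' s' = pS p (eσ s') := by
  unfold pS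
  exact Fintype.sum_equiv eα _ _ (fun x' => hk s' x')

lemma mE_transfer (hk : ∀ s x, p' s x = p (eσ s) (eα x)) (f : α → ℝ) :
    mE p' (fun x => f (eα x)) = mE p f := by
  unfold mE
  exact Fintype.sum_equiv eα _ _ (fun x' => by rw [pX_transfer p p' eσ eα hk x'])

lemma nE_transfer (hk : ∀ s x, p' s x = p (eσ s) (eα x)) (f : α → ℝ) :
    nE p' (fun x => f (eα x)) = nE p f := by
  unfold nE
  exact Fintype.sum_equiv eα _ _ (fun x' => by rw [pX_transfer p p' eσ eα hk x'])

lemma Phi_transfer (hk : ∀ s x, p' s x = p (eσ s) (eα x)) (f : α → ℝ) :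
    Phi p' (fun x => f (eα x)) = Phi p f := by
  unfold Phi
  refine Fintype.sum_equiv eσ _ _ (fun s' => ?_)
  have inner : (∑ x', p' s' x' * f (eα x')) = ∑ x, p (eσ s') x * f x :=
    Fintype.sum_equiv eα _ _ (fun x' => by rw [hk s' x'])
  rw [inner, pS_transfer p p' eσ eα hk s']

end Transfer

section PiKernel
variable (p : σ → α → ℝ)

lemma sum_pi_prod {ι : Type*} [Fintype ι] [DecidableEq ι] {κ : Type*} [Fintype κ]
    (f : ι → κ → ℝ) : ∑ x : ι → κ, ∏ i, f i (x i) = ∏ i, ∑ j, f i j := by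
  rw [Finset.prod_univ_sum]
  rw [Fintype.piFinset_univ]

noncomputable def Pk (n : ℕ) : (Fin n → σ) → (Fin n → α) → ℝ :=
  fun s x => ∏ i, p (s i) (x i)

lemma pS_Pk (n : ℕ) (s : Fin n → σ) : pS (Pk p n) s = ∏ i, pS p (s i) := by
  unfold pS Pk
  exact sum_pi_prod (fun i a => p (s i) a)

lemma pX_Pk (n : ℕ) (x : Fin n → α) : pX (Pk p n) x = ∏ i, pX p (x i) := by
  unfold pX Pk
  exact sum_pi_prod (fun i t => p t (x i))

lemma Pk_nonneg (hp0 : ∀ s x, 0 ≤ p s x) (n : ℕ) :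
    ∀ s x, 0 ≤ Pk p n s x := by
  intro s x
  exact Finset.prod_nonneg fun i _ => hp0 _ _

lemma Pk_pS_pos (hS : ∀ s, 0 < pS p s) (n : ℕ) :
    ∀ s, 0 < pS (Pk p n) s := by
  intro s
  rw [pS_Pk]
  exact Finset.prod_pos fun i _ => hS _

lemma Pk_pX_pos (hX : ∀ x, 0 < pX p x) (n : ℕ) :
    ∀ x, 0 < pX (Pk p n) x := by
  intro x
  rw [pX_Pk]
  exact Finset.prod_pos fun i _ => hX _

lemma Pk_pX1 (hpX1 : ∑ x, pX p x = 1) (n : ℕ) :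
    ∑ x, pX (Pk p n) x = 1 := by
  rw [Finset.sum_congr rfl (fun x _ => pX_Pk p n x)]
  rw [sum_pi_prod (fun _ a => pX p a)]
  simp [hpX1]

lemma Pk_pS1 (hS1 : ∑ s, pS p s = 1) (n : ℕ) :
    ∑ s, pS (Pk p n) s = 1 := by
  rw [Finset.sum_congr rfl (fun s _ => pS_Pk p n s)]
  rw [sum_pi_prod (fun _ a => pS p a)]
  simp [hS1]

lemma main_ineq (hp0 : ∀ s x, 0 ≤ p s x) (hS : ∀ s, 0 < pS p s)
    (hX : ∀ x, 0 < pX p x) (hpX1 : ∑ x, pX p x = 1) (hS1 : ∑ s, pS p s = 1)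
    (hd1 : deltaPIC p ≤ 1) :
    ∀ (n : ℕ) (F : (Fin n → α) → ℝ),
      (mE (Pk p n) F) ^ 2 + (deltaPIC p) ^ n * (nE (Pk p n) F - (mE (Pk p n) F) ^ 2)
        ≤ Phi (Pk p n) F := by
  have hd0 : 0 ≤ deltaPIC p := by
    apply delta_nonneg
    exact hS
  intro n
  induction n with
  | zero =>
    intro F
    have h1 : mE (Pk p 0) F = F default := by
      unfold mE
      rw [Fintype.sum_unique]
      rw [pX_Pk]
      simp
    have h2 : nE (Pk p 0) F = F default ^ 2 := by
      unfold nE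
      rw [Fintype.sum_unique]
      rw [pX_Pk]
      simp
    have h3 : Phi (Pk p 0) F = F default ^ 2 := by
      unfold Phi
      rw [Fintype.sum_unique, Fintype.sum_unique]
      rw [pS_Pk]
      have : Pk p 0 default default = 1 := by unfold Pk; simp
      rw [this]
      simp
    rw [h1, h2, h3]
    simp
  | succ n IH =>
    intro F
    set eσ : σ × (Fin n → σ) ≃ (Fin (n+1) → σ) := Fin.consEquiv (fun _ => σ) with heσ
    set eα : α × (Fin n → α) ≃ (Fin (n+1) → α) := Fin.consEquiv (fun _ => α) with heα
    set r : (σ × (Fin n → σ)) → (α × (Fin n → α)) → ℝ :=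
      fun z w => p z.1 w.1 * Pk p n z.2 w.2 with hrdef
    have hk : ∀ z w, r z w = Pk p (n+1) (eσ z) (eα w) := by
      intro z w
      rw [hrdef]
      simp only [heσ, heα]
      unfold Pk
      rw [Fin.prod_univ_succ]
      simp [Fin.consEquiv]
    have key := tensor_step p (Pk p n) hp0 (Pk_nonneg p hp0 n) hS (Pk_pS_pos p hS n)
      hpX1 (Pk_pX1 p hpX1 n) (deltaPIC p) ((deltaPIC p) ^ n) hd0 hd1
      (pow_nonneg hd0 n) (pow_le_one₀ hd0 hd1)
      (fun f => one_step p hp0 hS hX hpX1 hS1 f) IH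
      (fun w => F (eα w))
    rw [mE_transfer (Pk p (n+1)) r eσ eα hk F, nE_transfer (Pk p (n+1)) r eσ eα hk F,
      Phi_transfer (Pk p (n+1)) r eσ eα hk F] at key
    calc (mE (Pk p (n+1)) F) ^ 2
          + (deltaPIC p) ^ (n+1) * (nE (Pk p (n+1)) F - (mE (Pk p (n+1)) F) ^ 2)
        = (mE (Pk p (n+1)) F) ^ 2
          + deltaPIC p * (deltaPIC p) ^ n * (nE (Pk p (n+1)) F - (mE (Pk p (n+1)) F) ^ 2) := by
          rw [pow_succ]; ring
      _ ≤ Phi (Pk p (n+1)) F := key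

end PiKernel


section Assembly
variable (p : σ → α → ℝ)

lemma normalize_mem (hpX1 : ∑ x, pX p x = 1) (u : α → ℝ)
    (hv : 0 < nE p u - (mE p u) ^ 2) :
    (fun x => (u x - mE p u) / Real.sqrt (nE p u - (mE p u) ^ 2)) ∈ CSet p := by
  set m := mE p u with hm
  set v := nE p u - m ^ 2 with hvv
  have hv0 : (0:ℝ) ≤ v := hv.le
  have hsv : Real.sqrt v > 0 := Real.sqrt_pos.mpr hv
  have hsv2 : Real.sqrt v ^ 2 = v := Real.sq_sqrt hv0
  constructor
  · unfold mE
    have step : ∀ x : α, pX p x * ((u x - m) / Real.sqrt v)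
        = (pX p x * u x - m * pX p x) / Real.sqrt v := by
      intro x; field_simp
    rw [Finset.sum_congr rfl (fun x _ => step x), ← Finset.sum_div,
      Finset.sum_sub_distrib, ← Finset.mul_sum, hpX1]
    have : (∑ x, pX p x * u x) = m := rfl
    rw [this]
    simp
  · unfold nE
    have step : ∀ x : α, pX p x * ((u x - m) / Real.sqrt v) ^ 2
        = (pX p x * (u x - m) ^ 2) / v := by
      intro x; rw [div_pow, hsv2]; ring
    rw [Finset.sum_congr rfl (fun x _ => step x), ← Finset.sum_div,
      ← var_eq p hpX1 u, ← hm, ← hvv]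
    field_simp

lemma cset_nonempty (hp0 : ∀ s x, 0 ≤ p s x) (hX : ∀ x, 0 < pX p x)
    (hpX1 : ∑ x, pX p x = 1) (a b : α) (hab : a ≠ b) :
    (CSet p).Nonempty := by
  classical
  set u : α → ℝ := fun x => if x = a then 1 else 0 with hu
  have hmu : mE p u = pX p a := by
    unfold mE
    rw [hu]
    simp [mul_ite]
  have hv : 0 < nE p u - (mE p u) ^ 2 := by
    rw [var_eq p hpX1 u]
    have hb : pX p b * (u b - mE p u) ^ 2 = pX p b * (pX p a) ^ 2 := by
      rw [hu, hmu]; simp only []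
      rw [if_neg (fun h => hab h.symm)]; ring
    have hpos : 0 < pX p b * (u b - mE p u) ^ 2 := by
      rw [hb]
      have := hX a
      have := hX b
      positivity
    have : pX p b * (u b - mE p u) ^ 2 ≤ ∑ x, pX p x * (u x - mE p u) ^ 2 := by
      apply Finset.single_le_sum (f := fun x => pX p x * (u x - mE p u) ^ 2)
        (fun x _ => by have := (hX x).le; positivity) (Finset.mem_univ b)
    linarith
  exact ⟨_, normalize_mem p hpX1 u hv⟩

lemma mE_continuous : Continuous (mE p) := by
  unfold mE
  exact continuous_finset_sum _ fun x _ => continuous_const.mul (continuous_apply x)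

lemma nE_continuous : Continuous (nE p) := by
  unfold nE
  exact continuous_finset_sum _ fun x _ => continuous_const.mul ((continuous_apply x).pow 2)

lemma Phi_continuous : Continuous (Phi p) := by
  unfold Phi
  refine continuous_finset_sum _ fun s _ => ?_
  exact continuous_const.mul ((((continuous_finset_sum _ fun x _ =>
    continuous_const.mul (continuous_apply x)).div_const _).pow 2))

lemma cset_isCompact (hX : ∀ x, 0 < pX p x) : IsCompact (CSet p) := by
  apply Metric.isCompact_of_isClosed_isBounded
  · have h1 : IsClosed {f : α → ℝ | mE p f = 0} :=
      isClosed_singleton.preimage (mE_continuous p)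
    have h2 : IsClosed {f : α → ℝ | nE p f = 1} :=
      isClosed_singleton.preimage (nE_continuous p)
    exact h1.inter h2
  · rw [isBounded_iff_forall_norm_le]
    refine ⟨∑ x, Real.sqrt (1 / pX p x), ?_⟩
    intro f hf
    have hR0 : (0:ℝ) ≤ ∑ x, Real.sqrt (1 / pX p x) :=
      Finset.sum_nonneg fun x _ => Real.sqrt_nonneg _
    rw [pi_norm_le_iff_of_nonneg hR0]
    intro x0
    have h1 : pX p x0 * f x0 ^ 2 ≤ 1 := by
      have : pX p x0 * f x0 ^ 2 ≤ nE p f :=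
        Finset.single_le_sum (f := fun x => pX p x * f x ^ 2)
          (fun x _ => by have := (hX x).le; positivity) (Finset.mem_univ x0)
      rw [hf.2] at this
      exact this
    have h2 : f x0 ^ 2 ≤ 1 / pX p x0 := by
      rw [le_div_iff₀ (hX x0)]
      linarith [h1]
    have h3 : ‖f x0‖ ≤ Real.sqrt (1 / pX p x0) := by
      rw [Real.norm_eq_abs, ← Real.sqrt_sq_eq_abs]
      exact Real.sqrt_le_sqrt h2
    refine h3.trans ?_
    exact Finset.single_le_sum (f := fun x => Real.sqrt (1 / pX p x))
      (fun x _ => Real.sqrt_nonneg _) (Finset.mem_univ x0)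

lemma exists_min (hp0 : ∀ s x, 0 ≤ p s x) (hS : ∀ s, 0 < pS p s)
    (hX : ∀ x, 0 < pX p x) (hne : (CSet p).Nonempty) :
    ∃ f ∈ CSet p, Phi p f = deltaPIC p := by
  have hcpt : IsCompact (Phi p '' CSet p) := ((cset_isCompact p hX).image (Phi_continuous p))
  have hmem := hcpt.sInf_mem (hne.image _)
  rw [← deltaPIC_eq] at hmem
  obtain ⟨f, hf, hf2⟩ := hmem
  exact ⟨f, hf, hf2⟩

lemma cset_empty_of_subsingleton [Subsingleton α] (hpX1 : ∑ x, pX p x = 1) :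
    CSet p = ∅ := by
  ext f
  simp only [Set.mem_empty_iff_false, iff_false]
  rintro ⟨hm, hn⟩
  rcases isEmpty_or_nonempty α with he | hne
  · unfold nE at hn
    rw [Finset.univ_eq_empty, Finset.sum_empty] at hn
    norm_num at hn
  · obtain ⟨a⟩ := hne
    haveI : Unique α := uniqueOfSubsingleton a
    unfold mE at hm
    unfold nE at hn
    rw [Fintype.sum_unique] at hm hn
    rw [Fintype.sum_unique] at hpX1
    rw [hpX1] at hm hn
    rw [one_mul] at hm hn
    rw [hm] at hn
    norm_num at hn

lemma mE_prod_elem (f : α → ℝ) (n : ℕ) :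
    mE (Pk p n) (fun x => ∏ i, f (x i)) = (mE p f) ^ n := by
  unfold mE
  have step : ∀ x : Fin n → α, pX (Pk p n) x * ∏ i, f (x i)
      = ∏ i, (pX p (x i) * f (x i)) := by
    intro x
    rw [pX_Pk, Finset.prod_mul_distrib]
  rw [Finset.sum_congr rfl (fun x _ => step x), sum_pi_prod (fun _ a => pX p a * f a)]
  simp

lemma nE_prod_elem (f : α → ℝ) (n : ℕ) :
    nE (Pk p n) (fun x => ∏ i, f (x i)) = (nE p f) ^ n := by
  unfold nE
  have step : ∀ x : Fin n → α, pX (Pk p n) x * (∏ i, f (x i)) ^ 2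
      = ∏ i, (pX p (x i) * f (x i) ^ 2) := by
    intro x
    rw [pX_Pk, ← Finset.prod_pow, Finset.prod_mul_distrib]
  rw [Finset.sum_congr rfl (fun x _ => step x), sum_pi_prod (fun _ a => pX p a * f a ^ 2)]
  simp

lemma Phi_prod_elem (hS : ∀ s, 0 < pS p s) (f : α → ℝ) (n : ℕ) :
    Phi (Pk p n) (fun x => ∏ i, f (x i)) = (Phi p f) ^ n := by
  unfold Phi
  have step : ∀ s : Fin n → σ,
      pS (Pk p n) s * ((∑ x, Pk p n s x * ∏ i, f (x i)) / pS (Pk p n) s) ^ 2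
      = ∏ i, (pS p (s i) * ((∑ a, p (s i) a * f a) / pS p (s i)) ^ 2) := by
    intro s
    have hinner : (∑ x, Pk p n s x * ∏ i, f (x i)) = ∏ i, ∑ a, p (s i) a * f a := by
      have : ∀ x : Fin n → α, Pk p n s x * ∏ i, f (x i)
          = ∏ i, (p (s i) (x i) * f (x i)) := by
        intro x
        unfold Pk
        rw [Finset.prod_mul_distrib]
      rw [Finset.sum_congr rfl (fun x _ => this x),
        sum_pi_prod (fun i a => p (s i) a * f a)]
    rw [hinner, pS_Pk, ← Finset.prod_div_distrib, ← Finset.prod_pow,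
      ← Finset.prod_mul_distrib]
  rw [Finset.sum_congr rfl (fun s _ => step s),
    sum_pi_prod (fun i t => pS p t * ((∑ a, p t a * f a) / pS p t) ^ 2)]
  simp

end Assembly

end DeltaPICAux

open DeltaPICAux

/-- Tensorization of the smallest PIC quantity: for i.i.d. pairs
`(Sᵢ, Xᵢ) ∼ p_{S,X}`, `δ(p_{Sⁿ,Xⁿ}) = δ(p_{S,X})ⁿ`. -/
theorem deltaPIC_tensorize {σ α : Type*} [Fintype σ] [Fintype α]
    (n : ℕ) (hn : 0 < n)
    (p : σ → α → ℝ) (hp0 : ∀ s x, 0 ≤ p s x) (hp1 : ∑ s, ∑ x, p s x = 1)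
    (hS : ∀ s, 0 < ∑ x, p s x) (hX : ∀ x, 0 < ∑ s, p s x) :
    deltaPIC (fun (s : Fin n → σ) (x : Fin n → α) => ∏ i, p (s i) (x i)) =
      (deltaPIC p) ^ n := by
  classical
  have hS' : ∀ s, 0 < pS p s := hS
  have hX' : ∀ x, 0 < pX p x := hX
  have hS1 : ∑ s, pS p s = 1 := hp1
  have hpX1 : ∑ x, pX p x = 1 := by rw [← mass_comm p]; exact hp1
  show deltaPIC (Pk p n) = (deltaPIC p) ^ n
  rcases subsingleton_or_nontrivial α with hsub | hnt
  · -- subsingleton case : both sides are 0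
    have e1 : CSet p = ∅ := cset_empty_of_subsingleton p hpX1
    have e2 : CSet (Pk p n) = ∅ :=
      cset_empty_of_subsingleton (Pk p n) (Pk_pX1 p hpX1 n)
    rw [deltaPIC_eq, deltaPIC_eq, e1, e2]
    simp [Real.sInf_empty, zero_pow hn.ne']
  · obtain ⟨a, b, hab⟩ := hnt.exists_pair_ne
    have hne : (CSet p).Nonempty := cset_nonempty p hp0 hX' hpX1 a b hab
    obtain ⟨f₀, hf₀C, hf₀⟩ := exists_min p hp0 hS' hX' hne
    have hd0 : 0 ≤ deltaPIC p := delta_nonneg p hS'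
    have hd1 : deltaPIC p ≤ 1 := by
      rw [← hf₀]
      calc Phi p f₀ ≤ nE p f₀ := phi_le_nE p hp0 hS' f₀
        _ = 1 := hf₀C.2
    -- the product function
    set F₀ : (Fin n → α) → ℝ := fun x => ∏ i, f₀ (x i) with hF₀
    have hmF : mE (Pk p n) F₀ = 0 := by
      rw [hF₀, mE_prod_elem p f₀ n, hf₀C.1, zero_pow hn.ne']
    have hnF : nE (Pk p n) F₀ = 1 := by
      rw [hF₀, nE_prod_elem p f₀ n, hf₀C.2, one_pow]
    have hPF : Phi (Pk p n) F₀ = (deltaPIC p) ^ n := by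
      rw [hF₀, Phi_prod_elem p hS' f₀ n, hf₀]
    have hmem : (deltaPIC p) ^ n ∈ Phi (Pk p n) '' CSet (Pk p n) :=
      ⟨F₀, ⟨hmF, hnF⟩, hPF⟩
    rw [deltaPIC_eq]
    apply le_antisymm
    · exact csInf_le (bddBelow_phi_image (Pk p n) (Pk_pS_pos p hS' n)) hmem
    · apply le_csInf ⟨_, hmem⟩
      rintro t ⟨F, ⟨hmFe, hnFe⟩, rfl⟩
      have := main_ineq p hp0 hS' hX' hpX1 hS1 hd1 n F
      rw [hmFe, hnFe] at this
      simpa using this
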